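/- Let M ≥ 1 be a natural number and let η > 0, Δ > 0, λ > 0, α > 0, ν ∈ ℝ and 0 ≤ R_C < R_B be real numbers. Define the probability density f(r) = 2Δλ r e^{−Δλ(R_B² − r²)}/(1 − e^{−Δλ(R_B² − R_C²)}) on (R_C, R_B). Then (1/(2Δ)) ∫_{ν−Δ}^{ν+Δ} ∫_{R_C}^{R_B} (η(1+r^α)/M) · (1 + π² M² (ν−θ)²/12) · f(r) dr dθ = (η λ/(M(1 − e^{−Δλ(R_B² − R_C²)}))) · (2Δ + π² M² Δ³/18) · e^{−Δλ R_B²} · ( (e^{Δλ R_B²} − e^{Δλ R_C²})/(2Δλ) + Ω ), where Ω = ∫_{R_C}^{R_B} r^{α+1} e^{Δλ r²} dr. -/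

import Mathlib

open Real intervalIntegral

theorem nnff_far_integral (M : ℕ) (hM : 1 ≤ M) (η Δ lam α ν RC RB : ℝ)
    (hη : 0 < η) (hΔ : 0 < Δ) (hlam : 0 < lam) (hα : 0 < α)
    (hRC : 0 ≤ RC) (hR : RC < RB)
    (f : ℝ → ℝ)
    (hf : ∀ r : ℝ, f r = 2 * Δ * lam * r * Real.exp (-(Δ * lam * (RB ^ 2 - r ^ 2))) /
        (1 - Real.exp (-(Δ * lam * (RB ^ 2 - RC ^ 2))))) :
    (1 / (2 * Δ)) *
      ∫ θ in (ν - Δ)..(ν + Δ), ∫ r in RC..RB,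
        (η * (1 + r ^ α) / M) * (1 + π ^ 2 * (M : ℝ) ^ 2 * (ν - θ) ^ 2 / 12) * f r =
      (η * lam / (M * (1 - Real.exp (-(Δ * lam * (RB ^ 2 - RC ^ 2)))))) *
        (2 * Δ + π ^ 2 * (M : ℝ) ^ 2 * Δ ^ 3 / 18) *
        (Real.exp (-(Δ * lam * RB ^ 2)) *
          ((Real.exp (Δ * lam * RB ^ 2) - Real.exp (Δ * lam * RC ^ 2)) / (2 * Δ * lam) +
            ∫ r in RC..RB, r ^ (α + 1) * Real.exp (Δ * lam * r ^ 2))) := by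
  have hM0 : (0:ℝ) < (M:ℝ) := by exact_mod_cast Nat.lt_of_lt_of_le Nat.zero_lt_one hM
  have hRB2 : RC ^ 2 < RB ^ 2 := by nlinarith
  have hD : 0 < 1 - Real.exp (-(Δ * lam * (RB ^ 2 - RC ^ 2))) := by
    have hx : -(Δ * lam * (RB ^ 2 - RC ^ 2)) < 0 := by nlinarith [mul_pos hΔ hlam]
    have h := Real.exp_lt_exp.2 hx
    rw [Real.exp_zero] at h
    linarith
  -- continuity of rpow
  have hcα : Continuous fun r : ℝ => r ^ α := by
    apply continuous_iff_continuousAt.2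
    intro x
    exact Real.continuousAt_rpow_const x α (Or.inr hα.le)
  have hcα1 : Continuous fun r : ℝ => r ^ (α + 1) := by
    apply continuous_iff_continuousAt.2
    intro x
    exact Real.continuousAt_rpow_const x (α + 1) (Or.inr (by linarith))
  have hce : Continuous fun r : ℝ => Real.exp (Δ * lam * r ^ 2) := by continuity
  have hint1 : IntervalIntegrable (fun r : ℝ => r * Real.exp (Δ * lam * r ^ 2)) MeasureTheory.volume RC RB :=
    (continuous_id.mul hce).intervalIntegrable RC RB
  have hint2 : IntervalIntegrable (fun r : ℝ => r ^ (α + 1) * Real.exp (Δ * lam * r ^ 2)) MeasureTheory.volume RC RB :=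
    (hcα1.mul hce).intervalIntegrable RC RB
  -- step 1: pull out the θ-dependent factor from the inner integral
  have step1 : ∀ θ : ℝ,
      (∫ r in RC..RB, (η * (1 + r ^ α) / M) * (1 + π ^ 2 * (M : ℝ) ^ 2 * (ν - θ) ^ 2 / 12) * f r)
      = (1 + π ^ 2 * (M : ℝ) ^ 2 * (ν - θ) ^ 2 / 12) *
          ∫ r in RC..RB, (η * (1 + r ^ α) / M) * f r := by
    intro θ
    rw [← intervalIntegral.integral_const_mul]
    exact intervalIntegral.integral_congr fun r _ => by ring
  -- θ integral value
  have hIθ : (∫ θ in (ν - Δ)..(ν + Δ), (1 + π ^ 2 * (M : ℝ) ^ 2 * (ν - θ) ^ 2 / 12))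
      = 2 * Δ + π ^ 2 * (M : ℝ) ^ 2 * Δ ^ 3 / 18 := by
    have hderiv : ∀ θ ∈ Set.uIcc (ν - Δ) (ν + Δ),
        HasDerivAt (fun θ : ℝ => θ - π ^ 2 * (M : ℝ) ^ 2 * (ν - θ) ^ 3 / 36)
          (1 + π ^ 2 * (M : ℝ) ^ 2 * (ν - θ) ^ 2 / 12) θ := by
      intro θ _
      have h2 : HasDerivAt (fun θ : ℝ => (ν - θ) ^ 3) (((3:ℕ):ℝ) * (ν - θ) ^ 2 * (-1)) θ := by
        simpa using ((hasDerivAt_id θ).const_sub ν).fun_pow 3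
      have h3 := (hasDerivAt_id θ).sub ((h2.const_mul (π ^ 2 * (M : ℝ) ^ 2)).div_const 36)
      refine h3.congr_deriv ?_
      push_cast
      ring
    rw [intervalIntegral.integral_eq_sub_of_hasDerivAt hderiv
      ((Continuous.intervalIntegrable (by continuity) _ _))]
    ring
  -- the r * exp integral
  have hI1 : (∫ r in RC..RB, r * Real.exp (Δ * lam * r ^ 2))
      = (Real.exp (Δ * lam * RB ^ 2) - Real.exp (Δ * lam * RC ^ 2)) / (2 * Δ * lam) := by
    have hderiv : ∀ r ∈ Set.uIcc RC RB,
        HasDerivAt (fun r : ℝ => Real.exp (Δ * lam * r ^ 2) / (2 * Δ * lam))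
          (r * Real.exp (Δ * lam * r ^ 2)) r := by
      intro r _
      have h1 : HasDerivAt (fun r : ℝ => Δ * lam * r ^ 2) (Δ * lam * (2 * r)) r := by
        simpa using (hasDerivAt_pow 2 r).const_mul (Δ * lam)
      have h2 := (h1.exp).div_const (2 * Δ * lam)
      refine h2.congr_deriv ?_
      rw [div_eq_iff (by positivity)]
      ring
    rw [intervalIntegral.integral_eq_sub_of_hasDerivAt hderiv hint1]
    ring
  -- main r integral
  have key : (∫ r in RC..RB, (η * (1 + r ^ α) / M) * f r)
      = (η * 2 * Δ * lam * Real.exp (-(Δ * lam * RB ^ 2)) /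
          ((M : ℝ) * (1 - Real.exp (-(Δ * lam * (RB ^ 2 - RC ^ 2)))))) *
        ((∫ r in RC..RB, r * Real.exp (Δ * lam * r ^ 2)) +
          ∫ r in RC..RB, r ^ (α + 1) * Real.exp (Δ * lam * r ^ 2)) := by
    rw [← intervalIntegral.integral_add hint1 hint2, ← intervalIntegral.integral_const_mul]
    apply intervalIntegral.integral_congr
    intro r hr
    dsimp only
    have hr0 : 0 ≤ r := by
      rw [Set.uIcc_of_le hR.le] at hr
      exact le_trans hRC hr.1
    have hpow : r ^ (α + 1) = r ^ α * r := by
      rcases eq_or_lt_of_le hr0 with h | h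
      · rw [← h, Real.zero_rpow (by linarith : α + 1 ≠ 0), Real.zero_rpow hα.ne']
        ring
      · exact Real.rpow_add_one h.ne' α
    rw [hf r, hpow,
      show -(Δ * lam * (RB ^ 2 - r ^ 2)) = -(Δ * lam * RB ^ 2) + Δ * lam * r ^ 2 by ring,
      Real.exp_add]
    field_simp
  simp only [step1]
  rw [intervalIntegral.integral_mul_const, hIθ, key, hI1]
  field_simp
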